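/- Let F ⊆ ℂ be a subfield and p(X, Y) ∈ F[X, Y] irreducible in ℂ[X, Y]. Suppose z ∈ ℍ satisfies p(z, j(z)) = 0 and tr.deg._F F(z, j(z)) = 1. Then z and j(z) both lie in jcl(F). (Proof: p forces tr.deg._F F(z, j(z), j'(z), j''(z)) ≤ 3, while by Ax–Schanuel over the jcl-closed field jcl(F) this transcendence degree is 0 or 4, hence 0.) -/

import Mathlib

noncomputable section

open scoped Classical

/-- The group `GL₂(ℚ)`. -/
abbrev GL2Q := Matrix.GeneralLinearGroup (Fin 2) ℚ

variable {K : Type*} [Field K] [CharZero K]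

/-- Entry of a matrix in `GL₂(ℚ)`. -/
def mEntry (g : GL2Q) (i k : Fin 2) : ℚ := (g : Matrix (Fin 2) (Fin 2) ℚ) i k

/-- Numerator of the fractional linear action. -/
def moebNum (g : GL2Q) (x : K) : K := (mEntry g 0 0 : K) * x + (mEntry g 0 1 : K)

/-- Denominator of the fractional linear action. -/
def moebDen (g : GL2Q) (x : K) : K := (mEntry g 1 0 : K) * x + (mEntry g 1 1 : K)

/-- The fractional linear (Möbius) action `g·x = (ax+b)/(cx+d)`. -/
def moeb (g : GL2Q) (x : K) : K := moebNum g x / moebDen g x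

/-- `MoebRel g x y` holds if the action of `g` at `x` is defined (denominator nonzero)
and `g·x = y`. -/
def MoebRel (g : GL2Q) (x y : K) : Prop := moebDen g x ≠ 0 ∧ moeb g x = y

/-- The `G`-closure of a set `A ⊆ K`: all elements of the form `g·a`, `a ∈ A`, `g ∈ GL₂(ℚ)`. -/
def Gcl (A : Set K) : Set K := {x | ∃ a ∈ A, ∃ g : GL2Q, MoebRel g a x}

/-- A matrix is scalar if it is a rational multiple of the identity. -/
def IsScalarMat (g : GL2Q) : Prop :=
  ∃ r : ℚ, (g : Matrix (Fin 2) (Fin 2) ℚ) = r • (1 : Matrix (Fin 2) (Fin 2) ℚ)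

/-- `IsRed g m`: `m` is the reduced integral form of `g`, i.e. a positive rational
multiple of `g` with coprime integer entries. -/
def IsRed (g : GL2Q) (m : Matrix (Fin 2) (Fin 2) ℤ) : Prop :=
  (∃ r : ℚ, 0 < r ∧ ∀ i k, (m i k : ℚ) = r * mEntry g i k) ∧
    Int.gcd (Int.gcd (m 0 0) (m 0 1)) (Int.gcd (m 1 0) (m 1 1)) = 1

/-- `DetRed g N`: the determinant of the reduced form of `g` is `N`. -/
def DetRed (g : GL2Q) (N : ℤ) : Prop := ∃ m, IsRed g m ∧ m.det = N

/-- A `j`-field: a field of characteristic zero together with a domain `D` closed under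
the `GL₂(ℚ)`-action and functions `j, j', j'', j'''` satisfying the axioms of the
modular `j`-function (the differential equation, the modular-polynomial axioms and the
axiom on the singular values of `j`). -/
structure JField (K : Type*) [Field K] [CharZero K] where
  D : Set K
  j : K → K
  j' : K → K
  j'' : K → K
  j''' : K → K
  /-- The family of modular polynomials `Φ_N`. -/
  Φ : ℕ → MvPolynomial (Fin 2) ℤ
  D_closed : ∀ z ∈ D, ∀ g : GL2Q, moebDen g z ≠ 0 ∧ moeb g z ∈ D
  deq : ∀ z ∈ D, j z ≠ 0 → j z ≠ 1728 → j' z ≠ 0 →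
    j''' z / j' z - (3/2) * (j'' z / j' z)^2
      + ((j z)^2 - 1968 * j z + 2654208) / (2 * (j z)^2 * (j z - 1728)^2) * (j' z)^2 = 0
  mod_iff : ∀ z₁ ∈ D, ∀ z₂ ∈ D, ∀ N : ℕ, 0 < N →
    (MvPolynomial.aeval ![j z₁, j z₂] (Φ N) = 0 ↔
      ∃ g : GL2Q, DetRed g (N : ℤ) ∧ MoebRel g z₂ z₁)
  sing : ∀ z ∈ D, (j z = 0 ∨ j z = 1728 ∨ j' z = 0) →
    ∃ g : GL2Q, ¬ IsScalarMat g ∧ MoebRel g z z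

namespace JField

variable (F : JField K)

/-- A point of the domain is special if `Φ_N(j(z), j(z)) = 0` for some `N > 1`. -/
def Special (z : K) : Prop :=
  ∃ N : ℕ, 1 < N ∧ MvPolynomial.aeval ![F.j z, F.j z] (F.Φ N) = 0

/-- `J(S) = j(S) ∪ j'(S) ∪ j''(S)`. -/
def JImage (S : Set K) : Set K := F.j '' S ∪ F.j' '' S ∪ F.j'' '' S

/-- A `j`-derivation: a derivation `der` with `der(j⁽ᵗ⁾(z)) = j⁽ᵗ⁺¹⁾(z)·derz` for `z ∈ D`. -/
def IsJDer (der : Derivation ℚ K K) : Prop :=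
  ∀ z ∈ F.D, der (F.j z) = F.j' z * der z ∧ der (F.j' z) = F.j'' z * der z ∧
    der (F.j'' z) = F.j''' z * der z

/-- The `j`-closure of `X`: the intersection of the kernels of all `j`-derivations
vanishing on `X`. -/
def jcl (X : Set K) : Set K :=
  {a | ∀ der : Derivation ℚ K K, F.IsJDer der → (∀ x ∈ X, der x = 0) → der a = 0}

/-- The `j`-closure of a set, as a subfield. -/
def jclSubfield (X : Set K) : Subfield K where
  carrier := F.jcl X
  zero_mem' := fun der _ _ => by simp
  one_mem' := fun der _ _ => by simp
  add_mem' := fun ha hb der hj hX => by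
    rw [map_add, ha der hj hX, hb der hj hX, add_zero]
  mul_mem' := fun {a b} ha hb der hj hX => by
    rw [Derivation.leibniz, ha der hj hX, hb der hj hX]; simp
  neg_mem' := fun {a} ha der hj hX => by rw [map_neg, ha der hj hX, neg_zero]
  inv_mem' := fun a ha der hj hX => by
    rw [Derivation.leibniz_inv, ha der hj hX]; simp

end JField

/-- The transcendence degree of the field generated by `A` over the subfield `Fb`:
the least size of a finite subset `S ⊆ A` such that every element of `A` is algebraic
over `Fb(S)` (`⊤` if there is no such set). -/
def trdegNat (Fb : Subfield K) (A : Set K) : ℕ∞ :=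
  sInf {n : ℕ∞ | ∃ S : Finset K, ↑S ⊆ A ∧ (S.card : ℕ∞) = n ∧
    ∀ a ∈ A, IsAlgebraic (Subfield.closure ((Fb : Set K) ∪ ↑S)) a}

/-- The dimension of `A` over `B` in the pregeometry `Gcl`: the least size of a finite
subset `S ⊆ A` with `A ⊆ Gcl(S ∪ B)`. -/
def Gdim (A B : Set K) : ℕ∞ :=
  sInf {n : ℕ∞ | ∃ S : Finset K, ↑S ⊆ A ∧ (S.card : ℕ∞) = n ∧ A ⊆ Gcl (↑S ∪ B)}

namespace JField

variable (F : JField K)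

/-- The dimension of `A` over `B` in the pregeometry `jcl`. -/
def jdim (A B : Set K) : ℕ∞ :=
  sInf {n : ℕ∞ | ∃ S : Finset K, ↑S ⊆ A ∧ (S.card : ℕ∞) = n ∧ A ⊆ F.jcl (↑S ∪ B)}

end JField

/-- A `j`-subfield of a `j`-field `(K, D)`: a subfield `A` together with a subset
`D_A ⊆ D ∩ A` closed under the `GL₂(ℚ)`-action, such that `A` is closed under
`j, j', j'', j'''` on `D_A`. -/
structure JSubfield (F : JField K) where
  carrier : Subfield K
  dom : Set K
  dom_subset : dom ⊆ F.D
  dom_mem : ∀ z ∈ dom, z ∈ carrier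
  dom_closed : ∀ z ∈ dom, ∀ g : GL2Q, moeb g z ∈ dom
  jmem : ∀ z ∈ dom, F.j z ∈ carrier ∧ F.j' z ∈ carrier ∧ F.j'' z ∈ carrier ∧
    F.j''' z ∈ carrier

namespace JSubfield

variable {F : JField K}

/-- Inclusion of `j`-subfields. -/
def le (A B : JSubfield F) : Prop := A.carrier ≤ B.carrier ∧ A.dom ⊆ B.dom

/-- Union (compositum) of two `j`-subfields. -/
def union (A B : JSubfield F) : JSubfield F where
  carrier := A.carrier ⊔ B.carrier
  dom := A.dom ∪ B.dom
  dom_subset := Set.union_subset A.dom_subset B.dom_subset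
  dom_mem := by
    rintro z (hz | hz)
    · exact SetLike.le_def.mp le_sup_left (A.dom_mem z hz)
    · exact SetLike.le_def.mp le_sup_right (B.dom_mem z hz)
  dom_closed := by
    rintro z (hz | hz) g
    · exact Or.inl (A.dom_closed z hz g)
    · exact Or.inr (B.dom_closed z hz g)
  jmem := by
    rintro z (hz | hz)
    · obtain ⟨h1, h2, h3, h4⟩ := A.jmem z hz
      exact ⟨SetLike.le_def.mp le_sup_left h1, SetLike.le_def.mp le_sup_left h2,
        SetLike.le_def.mp le_sup_left h3, SetLike.le_def.mp le_sup_left h4⟩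
    · obtain ⟨h1, h2, h3, h4⟩ := B.jmem z hz
      exact ⟨SetLike.le_def.mp le_sup_right h1, SetLike.le_def.mp le_sup_right h2,
        SetLike.le_def.mp le_sup_right h3, SetLike.le_def.mp le_sup_right h4⟩

/-- Intersection of two `j`-subfields. -/
def inter (A B : JSubfield F) : JSubfield F where
  carrier := A.carrier ⊓ B.carrier
  dom := A.dom ∩ B.dom
  dom_subset := fun z hz => A.dom_subset hz.1
  dom_mem := fun z hz => ⟨A.dom_mem z hz.1, B.dom_mem z hz.2⟩
  dom_closed := fun z hz g => ⟨A.dom_closed z hz.1 g, B.dom_closed z hz.2 g⟩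
  jmem := fun z hz => by
    obtain ⟨a1, a2, a3, a4⟩ := A.jmem z hz.1
    obtain ⟨b1, b2, b3, b4⟩ := B.jmem z hz.2
    exact ⟨⟨a1, b1⟩, ⟨a2, b2⟩, ⟨a3, b3⟩, ⟨a4, b4⟩⟩

end JSubfield

namespace JField

variable (F : JField K)

/-- `A` is a `j`-subfield finitely generated over `Cs`: `A` is the smallest
`j`-subfield containing `Cs` and some finite set `X`. -/
def FinGenOver (Cs A : JSubfield F) : Prop :=
  Cs.le A ∧ ∃ X : Finset K, ↑X ⊆ (A.carrier : Set K) ∧ (↑X ∩ F.D ⊆ A.dom) ∧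
    ∀ B : JSubfield F, Cs.le B → ↑X ⊆ (B.carrier : Set K) → (↑X ∩ F.D ⊆ B.dom) → A.le B

/-- The predimension `δ_j(A | Cs) = tr.deg._Cs A − 3·dim_G(D_A | D_Cs)`. -/
def delta (Cs A : JSubfield F) : ℤ :=
  ((trdegNat Cs.carrier (A.carrier : Set K)).toNat : ℤ)
    - 3 * ((Gdim A.dom Cs.dom).toNat : ℤ)

/-- The predimension of a finite tuple `z` over a `j`-subfield `A`:
`tr.deg._A A(z, J(z)) − 3·dim_G(z | D_A)`. -/
def deltaTuple (A : JSubfield F) (z : Finset K) : ℤ :=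
  ((trdegNat A.carrier ((↑z : Set K) ∪ F.JImage ↑z)).toNat : ℤ)
    - 3 * ((Gdim (↑z : Set K) A.dom).toNat : ℤ)

/-- Self-sufficiency of an extension of `j`-subfields: `A ⊴ B` iff `A ≤ B` and
`δ_j(z | A) ≥ 0` for all finite tuples `z` from `D_B`. -/
def SelfSuff (A B : JSubfield F) : Prop :=
  A.le B ∧ ∀ z : Finset K, (↑z : Set K) ⊆ B.dom → 0 ≤ F.deltaTuple A z

/-- Self-sufficiency of a `j`-subfield in the ambient `j`-field `(K, D)`. -/
def SelfSuffAmb (A : JSubfield F) : Prop :=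
  ∀ z : Finset K, (↑z : Set K) ⊆ F.D → 0 ≤ F.deltaTuple A z

/-- The ambient `j`-field is graph-generated by `J`. -/
def GraphGenAmb : Prop := Subfield.closure (F.D ∪ F.JImage F.D) = ⊤

/-- A `j`-subfield is graph-generated by `J`. -/
def GraphGen (A : JSubfield F) : Prop :=
  A.carrier = Subfield.closure (A.dom ∪ F.JImage A.dom)

/-- Evaluation map for `j`-polynomials: the variable `(i, 0)` is sent to `aᵢ`, and
`(i, 1), (i, 2), (i, 3)` to `j(aᵢ), j'(aᵢ), j''(aᵢ)`. -/
def jVal {n : ℕ} (a : Fin n → K) : Fin n × Fin 4 → K :=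
  fun p => ![a p.1, F.j (a p.1), F.j' (a p.1), F.j'' (a p.1)] p.2

/-- The formal partial derivative `derf/derXᵢ` of a `j`-polynomial, evaluated at `a`,
where `j, j', j''` are differentiated by the chain rule. -/
def jpderivEval {n : ℕ} (i : Fin n) (f : MvPolynomial (Fin n × Fin 4) K)
    (a : Fin n → K) : K :=
  MvPolynomial.eval (F.jVal a) (MvPolynomial.pderiv (i, (0 : Fin 4)) f)
  + F.j' (a i) * MvPolynomial.eval (F.jVal a) (MvPolynomial.pderiv (i, (1 : Fin 4)) f)
  + F.j'' (a i) * MvPolynomial.eval (F.jVal a) (MvPolynomial.pderiv (i, (2 : Fin 4)) f)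
  + F.j''' (a i) * MvPolynomial.eval (F.jVal a) (MvPolynomial.pderiv (i, (3 : Fin 4)) f)

/-- `a` is a solution of the Khovanskii system of `j`-polynomials `f` over `B`:
the `fᵢ` have coefficients in the subring generated by `B`, vanish at `a`, and the
Jacobian determinant of formal `j`-polynomial partial derivatives does not vanish at `a`. -/
def IsKhovanskiiSol (B : Set K) {n : ℕ}
    (f : Fin n → MvPolynomial (Fin n × Fin 4) K) (a : Fin n → K) : Prop :=
  (∀ i m, (f i).coeff m ∈ Subring.closure B) ∧
  (∀ i, MvPolynomial.eval (F.jVal a) (f i) = 0) ∧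
  (Matrix.of fun i k => F.jpderivEval k (f i) a).det ≠ 0

/-- The Khovanskii closure `kcl(B)`: elements which are the first coordinate of a
non-singular solution of a Khovanskii system of `j`-polynomials over `B`. -/
def kcl (B : Set K) : Set K :=
  {a | ∃ (n : ℕ) (f : Fin (n+1) → MvPolynomial (Fin (n+1) × Fin 4) K)
    (x : Fin (n+1) → K), x 0 = a ∧ F.IsKhovanskiiSol B f x}

end JField

/-- `z` is a `Gcl`-basis of `Ddom` over `B`: the coordinates of `z` lie in `Ddom`,
span `Ddom` over `B`, and are `Gcl`-independent over `B`. -/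
def IsGclBasis {n : ℕ} (z : Fin n → K) (Ddom B : Set K) : Prop :=
  (∀ i, z i ∈ Ddom) ∧ Ddom ⊆ Gcl (Set.range z ∪ B) ∧
  ∀ i, z i ∉ Gcl ((Set.range z \ {z i}) ∪ B)


namespace JField

variable (F : JField K)

/-- The predimension of a finite set `X` over `(C, D_C)` with `C = jcl(∅)`:
`δ_j(X) = tr.deg._C C(X, J(dom)) − 3·dim_G(X ∩ D | D_C)`, where `dom = Gcl((X ∩ D) ∪ D_C)`
is the domain of the `j`-subfield generated by `X` over `(C, D_C)`. -/
def deltaFinset (X : Finset K) : ℤ :=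
  ((trdegNat (F.jclSubfield ∅)
      ((↑X : Set K) ∪ F.JImage (Gcl (((↑X : Set K) ∩ F.D) ∪ (F.jcl ∅ ∩ F.D))))).toNat : ℤ)
    - 3 * ((Gdim ((↑X : Set K) ∩ F.D) (F.jcl ∅ ∩ F.D)).toNat : ℤ)

end JField

end

set_option maxHeartbeats 1000000 in
private lemma isAlg_of_mem' (M : Subfield ℂ) {a : ℂ} (h : a ∈ M) : IsAlgebraic M a := by
  exact isAlgebraic_algebraMap (R := M) (A := ℂ) ⟨a, h⟩

set_option maxHeartbeats 1000000 in
set_option synthInstance.maxHeartbeats 1000000 in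
private lemma isAlg_of_root' (M : Subfield ℂ) (q : Polynomial ℂ) (hq : q ≠ 0)
    (hc : ∀ n, q.coeff n ∈ M) (x : ℂ) (hx : q.eval x = 0) : IsAlgebraic M x := by
  classical
  set q' : Polynomial M := ∑ i ∈ q.support, Polynomial.monomial i (⟨q.coeff i, hc i⟩ : M) with hq'
  have hmap : q'.map (algebraMap M ℂ) = q := by
    rw [hq', Polynomial.map_sum]
    simp only [Polynomial.map_monomial]
    exact (q.as_sum_support).symm
  refine ⟨q', fun h0 => hq ?_, ?_⟩
  · rw [← hmap, h0, Polynomial.map_zero]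
  · rw [Polynomial.aeval_def, ← Polynomial.eval_map, hmap, hx]

set_option maxHeartbeats 1000000 in
set_option synthInstance.maxHeartbeats 1000000 in
private lemma der_zero_of_alg' (der : Derivation ℚ ℂ ℂ) (M : Subfield ℂ)
    (hM : ∀ x ∈ M, der x = 0) {a : ℂ} (ha : IsAlgebraic M a) : der a = 0 := by
  have hint : IsIntegral M a := ha.isIntegral
  haveI : CharZero M := (algebraMap M ℂ).charZero
  have key : ∀ r : Polynomial M,
      der (Polynomial.aeval a r) = Polynomial.aeval a (Polynomial.derivative r) * der a := by
    intro r
    induction r using Polynomial.induction_on' with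
    | add f g hf hg => simp [hf, hg, add_mul]
    | monomial n c =>
      have hc : der (algebraMap M ℂ c) = 0 := hM _ c.2
      simp only [Polynomial.aeval_monomial, Derivation.leibniz, Derivation.leibniz_pow, hc,
        Polynomial.derivative_monomial, map_mul, map_natCast, nsmul_eq_mul, smul_eq_mul]
      ring
  have h1 : Polynomial.aeval a (Polynomial.derivative (minpoly M a)) * der a = 0 := by
    rw [← key, minpoly.aeval, map_zero]
  have h2 : Polynomial.aeval a (Polynomial.derivative (minpoly M a)) ≠ 0 :=
    ((minpoly.irreducible hint).separable).aeval_derivative_ne_zero (minpoly.aeval M a)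
  exact (mul_eq_zero.mp h1).resolve_left h2

set_option maxHeartbeats 1000000 in
private lemma mv_dep' (M₁ M₂ : Subfield ℂ) (p : MvPolynomial (Fin 2) ℂ) (hp : p ≠ 0)
    (h1 : ∀ m, MvPolynomial.coeff m p ∈ M₁) (h2 : ∀ m, MvPolynomial.coeff m p ∈ M₂)
    (z y : ℂ) (hy : y ∈ M₁)
    (h0 : MvPolynomial.eval ![z, y] p = 0) :
    IsAlgebraic M₁ z ∨ IsAlgebraic M₂ y := by
  classical
  set Q : Polynomial ℂ :=
    ∑ m ∈ p.support, Polynomial.monomial (m 0) (MvPolynomial.coeff m p * y ^ (m 1)) with hQdef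
  have hQcoeff : ∀ n, Q.coeff n =
      ∑ m ∈ p.support, if m 0 = n then MvPolynomial.coeff m p * y ^ (m 1) else 0 := by
    intro n
    rw [hQdef, Polynomial.finset_sum_coeff]
    exact Finset.sum_congr rfl fun m _ => Polynomial.coeff_monomial
  have hQeval : Q.eval z = 0 := by
    rw [← h0, MvPolynomial.eval_eq', hQdef, Polynomial.eval_finset_sum]
    refine Finset.sum_congr rfl fun m _ => ?_
    rw [Polynomial.eval_monomial, Fin.prod_univ_two]
    simp only [Matrix.cons_val_zero, Matrix.cons_val_one, Matrix.head_cons]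
    ring
  by_cases hQ0 : Q = 0
  · right
    obtain ⟨m0, hm0⟩ : ∃ m, m ∈ p.support :=
      Finset.nonempty_iff_ne_empty.mpr (fun h => hp (MvPolynomial.support_eq_empty.mp h))
    set Rp : Polynomial ℂ := ∑ m ∈ p.support,
      if m 0 = m0 0 then Polynomial.monomial (m 1) (MvPolynomial.coeff m p) else 0 with hRdef
    have hReval : Rp.eval y = 0 := by
      have key := hQcoeff (m0 0)
      rw [hQ0, Polynomial.coeff_zero] at key
      rw [hRdef, Polynomial.eval_finset_sum]
      refine Eq.trans (Finset.sum_congr rfl fun m _ => ?_) key.symm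
      rw [apply_ite (Polynomial.eval y)]
      simp [Polynomial.eval_monomial]
    have hRcoeff : ∀ n, Rp.coeff n ∈ M₂ := by
      intro n
      rw [hRdef, Polynomial.finset_sum_coeff]
      refine Subfield.sum_mem _ fun m _ => ?_
      split_ifs
      · rw [Polynomial.coeff_monomial]
        split_ifs
        · exact h2 m
        · exact M₂.zero_mem
      · simpa using M₂.zero_mem
    have hRne : Rp ≠ 0 := by
      intro h
      have hco : Rp.coeff (m0 1) = MvPolynomial.coeff m0 p := by
        rw [hRdef, Polynomial.finset_sum_coeff]
        rw [Finset.sum_eq_single m0]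
        · simp
        · intro m hm hne
          split_ifs with h00
          · rw [Polynomial.coeff_monomial]
            split_ifs with h11
            · exact absurd (Finsupp.ext (by rw [Fin.forall_fin_two]; exact ⟨h00, h11⟩)) hne
            · rfl
          · simp
        · intro h; exact absurd hm0 h
      rw [h, Polynomial.coeff_zero] at hco
      exact (MvPolynomial.mem_support_iff.mp hm0) hco.symm
    exact isAlg_of_root' M₂ Rp hRne hRcoeff y hReval
  · left
    refine isAlg_of_root' M₁ Q hQ0 (fun n => ?_) z hQeval
    rw [hQcoeff]
    refine Subfield.sum_mem _ fun m _ => ?_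
    split_ifs
    · exact M₁.mul_mem (h1 m) (M₁.pow_mem hy _)
    · exact M₁.zero_mem

/-- (For the complex `j`-field, assuming the Ax–Schanuel input that
`tr.deg._{jcl(F)} jcl(F)(w, j(w), j'(w), j''(w)) ∈ {0, 4}` for `w ∈ ℍ`.) If
`p(X, Y) ∈ F[X, Y]` is irreducible in `ℂ[X, Y]`, `z ∈ ℍ` with `p(z, j(z)) = 0` and
`tr.deg._F F(z, j(z)) = 1`, then `z, j(z) ∈ jcl(F)`. -/
theorem curve_point_mem_jcl (JF : JField ℂ)
    (hD : JF.D = {w : ℂ | w.im ≠ 0})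
    (Fs : Subfield ℂ) (p : MvPolynomial (Fin 2) ℂ)
    (hcoeff : ∀ m, p.coeff m ∈ Fs) (hirr : Irreducible p)
    (hAS : ∀ w ∈ JF.D,
      trdegNat (JF.jclSubfield ↑Fs) {w, JF.j w, JF.j' w, JF.j'' w} = 0 ∨
      trdegNat (JF.jclSubfield ↑Fs) {w, JF.j w, JF.j' w, JF.j'' w} = 4)
    (z : ℂ) (hz : z ∈ JF.D)
    (heval : MvPolynomial.eval ![z, JF.j z] p = 0)
    (htd : trdegNat Fs {z, JF.j z} = 1) :
    z ∈ JF.jcl ↑Fs ∧ JF.j z ∈ JF.jcl ↑Fs  := by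
  classical
  set L : Subfield ℂ := JF.jclSubfield ↑Fs with hLdef
  have hFsL : ∀ x ∈ Fs, x ∈ (L : Set ℂ) := fun x hx der _ hvan => hvan x hx
  set A : Set ℂ := {z, JF.j z, JF.j' z, JF.j'' z} with hA
  have hzA : z ∈ A := Set.mem_insert _ _
  have hjA : JF.j z ∈ A := by rw [hA]; right; left; rfl
  have hj'A : JF.j' z ∈ A := by rw [hA]; right; right; left; rfl
  have hj''A : JF.j'' z ∈ A := by rw [hA]; right; right; right; rfl
  have key_le : ∀ S : Finset ℂ, ↑S ⊆ A →
      (∀ a ∈ A, IsAlgebraic (Subfield.closure ((L : Set ℂ) ∪ ↑S)) a) →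
      trdegNat L A ≤ (S.card : ℕ∞) :=
    fun S hsub halg => sInf_le ⟨S, hsub, rfl, halg⟩
  -- the two candidate finsets
  set S₁ : Finset ℂ := {JF.j z, JF.j' z, JF.j'' z} with hS₁
  set S₂ : Finset ℂ := {z, JF.j' z, JF.j'' z} with hS₂
  have hcard : ∀ a b c : ℂ, (({a, b, c} : Finset ℂ).card : ℕ∞) ≤ 3 := by
    intro a b c
    have h1 : ({a, b, c} : Finset ℂ).card ≤ 3 := by
      refine le_trans (Finset.card_insert_le _ _) ?_
      have := Finset.card_insert_le b ({c} : Finset ℂ)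
      simp only [Finset.card_singleton] at this
      omega
    exact_mod_cast h1
  have hdep := mv_dep' (Subfield.closure ((L : Set ℂ) ∪ ↑S₁))
      (Subfield.closure ((L : Set ℂ) ∪ ↑S₂)) p hirr.ne_zero
      (fun m => Subfield.subset_closure (Or.inl (hFsL _ (hcoeff m))))
      (fun m => Subfield.subset_closure (Or.inl (hFsL _ (hcoeff m))))
      z (JF.j z) (Subfield.subset_closure (Or.inr (by simp [hS₁]))) heval
  have hle3 : trdegNat L A ≤ 3 := by
    rcases hdep with halgz | halgj
    · refine le_trans (key_le S₁ ?_ ?_) (hcard _ _ _)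
      · intro x hx
        simp only [hS₁, Finset.coe_insert, Finset.coe_singleton, Set.mem_insert_iff,
          Set.mem_singleton_iff] at hx
        rcases hx with rfl | rfl | rfl
        · exact hjA
        · exact hj'A
        · exact hj''A
      · intro a ha
        rw [hA] at ha
        rcases ha with rfl | ha
        · exact halgz
        · exact isAlg_of_mem' _ (Subfield.subset_closure (Or.inr (by
            simpa [hS₁] using ha)))
    · refine le_trans (key_le S₂ ?_ ?_) (hcard _ _ _)
      · intro x hx
        simp only [hS₂, Finset.coe_insert, Finset.coe_singleton, Set.mem_insert_iff,
          Set.mem_singleton_iff] at hx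
        rcases hx with rfl | rfl | rfl
        · exact hzA
        · exact hj'A
        · exact hj''A
      · intro a ha
        rw [hA] at ha
        rcases ha with rfl | rfl | ha
        · exact isAlg_of_mem' _ (Subfield.subset_closure (Or.inr (by simp [hS₂])))
        · exact halgj
        · refine isAlg_of_mem' _ (Subfield.subset_closure (Or.inr ?_))
          simp only [hS₂, Finset.coe_insert, Finset.coe_singleton, Set.mem_insert_iff,
            Set.mem_singleton_iff]
          simp only [Set.mem_insert_iff, Set.mem_singleton_iff] at ha
          tauto
  have htd0 : trdegNat L A = 0 := by
    rcases hAS z hz with h | h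
    · exact h
    · rw [h] at hle3
      norm_num at hle3
  have h0mem : (0 : ℕ∞) ∈ {n : ℕ∞ | ∃ S : Finset ℂ, ↑S ⊆ A ∧ (S.card : ℕ∞) = n ∧
      ∀ a ∈ A, IsAlgebraic (Subfield.closure ((L : Set ℂ) ∪ ↑S)) a} := by
    by_contra hn
    have h1 : (1 : ℕ∞) ≤ trdegNat L A := by
      refine le_sInf fun b hb => ?_
      rcases eq_or_ne b 0 with rfl | hb0
      · exact absurd hb hn
      · exact ENat.one_le_iff_ne_zero.mpr hb0
    rw [htd0] at h1
    norm_num at h1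
  obtain ⟨S, hsub, hcard0, halg⟩ := h0mem
  have hSempty : S = ∅ := Finset.card_eq_zero.mp (by exact_mod_cast hcard0)
  rw [hSempty] at halg
  have hclosub : Subfield.closure ((L : Set ℂ) ∪ ↑(∅ : Finset ℂ)) ≤ L :=
    Subfield.closure_le.mpr (by simp)
  have hfinal : ∀ a ∈ A, a ∈ JF.jcl ↑Fs := by
    intro a ha der hder hvan
    refine der_zero_of_alg' der (Subfield.closure ((L : Set ℂ) ∪ ↑(∅ : Finset ℂ))) ?_ (halg a ha)
    intro x hx
    exact (hclosub hx) der hder hvan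
  exact ⟨hfinal z hzA, hfinal (JF.j z) hjA⟩
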